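/- arXiv:0801.0616 — 2 statements merged into one kernel-verified Lean document; each statement's English description precedes it below -/
import Mathlib

section
/- Let D be a locally nilpotent ℂ-derivation of ℂ[X_1, …, X_n] and let d := min{m ∈ ℕ : D^[m](X_i) = 0 for all i = 1, …, n}. Then for every polynomial p ∈ ℂ[T], one has [for all j, Σ_m (coeff of T^m in p) · exp(mD)(X_j) = 0] if and only if (T − 1)^d divides p. In other words, the minimal polynomial of the exponential automorphism F = (exp(D)(X_1), …, exp(D)(X_n)) is μ_F(T) = (T − 1)^d. -/
open Classical in
/-- The exponential `exp(D)(a) = Σ_{i=0}^{∞} (1/i!) • D^[i](a)` of a derivation `D`;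
for each `a` on which `D` is eventually nilpotent this is the (finite) sum of all
possibly nonzero terms. -/
noncomputable def expMap (k : Type*) {A : Type*} [Field k] [CharZero k] [CommRing A]
    [Algebra k A] (D : Derivation k A A) (a : A) : A :=
  if h : ∃ n : ℕ, (⇑D)^[n] a = 0 then
    ∑ i ∈ Finset.range (Nat.find h), ((Nat.factorial i : k)⁻¹) • (⇑D)^[i] a
  else a

section Aux

variable {k A : Type*} [Field k] [CharZero k] [CommRing A] [Algebra k A]

lemma iter_toLin (D : Derivation k A A) (i : ℕ) (a : A) :
    (⇑D)^[i] a = ((D : A →ₗ[k] A) ^ i) a := by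
  rw [Module.End.pow_apply, Derivation.coeFn_coe]

lemma iter_vanish (D : Derivation k A A) {a : A} {N : ℕ} (h : (⇑D)^[N] a = 0)
    {i : ℕ} (hi : N ≤ i) : (⇑D)^[i] a = 0 := by
  have : i = (i - N) + N := by omega
  rw [this, Function.iterate_add_apply, h, iter_toLin, map_zero]

lemma iter_zero (D : Derivation k A A) (i : ℕ) : (⇑D)^[i] (0 : A) = 0 := by
  rw [iter_toLin, map_zero]

lemma iter_smul_deriv (D : Derivation k A A) (m i : ℕ) (a : A) :
    (⇑(m • D))^[i] a = m ^ i • (⇑D)^[i] a := by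
  induction i with
  | zero => simp
  | succ i ih =>
    have hmap : ⇑D (m ^ i • (⇑D)^[i] a) = m ^ i • ⇑D ((⇑D)^[i] a) := by
      rw [← Derivation.coeFn_coe, map_nsmul]
    rw [Function.iterate_succ_apply', ih, Derivation.coe_smul, Pi.smul_apply, hmap,
      smul_smul, ← pow_succ', Function.iterate_succ_apply']

/-- Key computation: the exponential of `m • D` at `a`, when `D^[d] a = 0`. -/
lemma expMap_smul_eq (D : Derivation k A A) {a : A} {d : ℕ} (ha : (⇑D)^[d] a = 0) (m : ℕ) :
    expMap k (m • D) a
      = ∑ i ∈ Finset.range d, ((m : k) ^ i * (Nat.factorial i : k)⁻¹) • (⇑D)^[i] a := by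
  classical
  have hDi : ∀ i, d ≤ i → (⇑D)^[i] a = 0 := fun i hi => iter_vanish D ha hi
  have h : ∃ N : ℕ, (⇑(m • D))^[N] a = 0 := ⟨d, by rw [iter_smul_deriv, ha, smul_zero]⟩
  set N₀ := Nat.find h with hN₀
  have hfind : (⇑(m • D))^[N₀] a = 0 := Nat.find_spec h
  have hvan : ∀ i, N₀ ≤ i → (⇑(m • D))^[i] a = 0 := by
    intro i hi
    have : i = (i - N₀) + N₀ := by omega
    rw [this, Function.iterate_add_apply, hfind, iter_smul_deriv, iter_zero, smul_zero]
  have hvan' : ∀ i, d ≤ i → (⇑(m • D))^[i] a = 0 := by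
    intro i hi; rw [iter_smul_deriv, hDi i hi, smul_zero]
  rw [expMap, dif_pos h]
  set f : ℕ → A := fun i => ((Nat.factorial i : k)⁻¹) • (⇑(m • D))^[i] a with hf
  have h1 : ∑ i ∈ Finset.range N₀, f i = ∑ i ∈ Finset.range (max N₀ d), f i := by
    refine Finset.sum_subset (Finset.range_subset_range.2 (le_max_left _ _)) ?_
    intro i _ hi
    rw [Finset.mem_range, not_lt] at hi
    simp only [hf, hvan i hi, smul_zero]
  have h2 : ∑ i ∈ Finset.range d, f i = ∑ i ∈ Finset.range (max N₀ d), f i := by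
    refine Finset.sum_subset (Finset.range_subset_range.2 (le_max_right _ _)) ?_
    intro i _ hi
    rw [Finset.mem_range, not_lt] at hi
    simp only [hf, hvan' i hi, smul_zero]
  rw [show Finset.range (Nat.find h) = Finset.range N₀ from rfl, h1, ← h2]
  refine Finset.sum_congr rfl fun i _ => ?_
  simp only [hf]
  rw [iter_smul_deriv, ← Nat.cast_smul_eq_nsmul k, Nat.cast_pow, smul_smul, mul_comm]

end Aux

section Poly

open Polynomial

/-- The coefficients of `p ∘ (X + 1)` in terms of binomial sums. -/
lemma comp_X_add_one_coeff (p : ℂ[X]) (kk : ℕ) :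
    (p.comp (X + 1)).coeff kk
      = ∑ m ∈ Finset.range (p.natDegree + 1), p.coeff m * (m.choose kk : ℂ) := by
  conv_lhs => rw [comp_eq_sum_left]
  rw [p.sum_over_range' (f := fun e a => C a * (X + 1) ^ e) (by simp) (p.natDegree + 1)
    (Nat.lt_succ_self _)]
  rw [finset_sum_coeff]
  refine Finset.sum_congr rfl fun m _ => ?_
  rw [coeff_C_mul, coeff_X_add_one_pow]

lemma sub_one_pow_dvd_iff_comp (d : ℕ) (p : ℂ[X]) :
    (X - 1) ^ d ∣ p ↔ (X : ℂ[X]) ^ d ∣ p.comp (X + 1) := by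
  constructor
  · rintro ⟨q, rfl⟩
    rw [mul_comp, pow_comp, sub_comp, X_comp, one_comp]
    exact ⟨q.comp (X + 1), by ring⟩
  · rintro ⟨q, hq⟩
    have hcomp : (X + 1 : ℂ[X]).comp (X - 1) = X := by
      rw [add_comp, X_comp, one_comp]
      ring
    have hp : p = (p.comp (X + 1)).comp (X - 1) := by
      rw [comp_assoc, hcomp, comp_X]
    rw [hp, hq, mul_comp, pow_comp, X_comp]
    exact ⟨q.comp (X - 1), by ring⟩

/-- Equivalence between power-sum conditions and divisibility by `(X-1)^d`. -/
lemma poly_equiv (d : ℕ) (p : ℂ[X]) :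
    (∀ i < d, ∑ m ∈ Finset.range (p.natDegree + 1), p.coeff m * (m : ℂ) ^ i = 0)
      ↔ (X - 1) ^ d ∣ p := by
  set M := p.natDegree + 1 with hM
  set S : ℕ → ℂ := fun i => ∑ m ∈ Finset.range M, p.coeff m * (m : ℂ) ^ i with hS
  set B : ℕ → ℂ := fun kk => ∑ m ∈ Finset.range M, p.coeff m * (m.choose kk : ℂ) with hB
  have hcoeff : ∀ kk, (p.comp (X + 1)).coeff kk = B kk := fun kk => comp_X_add_one_coeff p kk
  have hdvd_iff : (X - 1) ^ d ∣ p ↔ ∀ kk < d, B kk = 0 := by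
    rw [sub_one_pow_dvd_iff_comp, X_pow_dvd_iff]
    exact forall_congr' fun kk => imp_congr_right fun _ => by rw [hcoeff]
  -- bridging: power sums kill evaluations of low-degree polynomials
  have bridge : ∀ (e : ℕ), (∀ i < e, S i = 0) → ∀ r : ℂ[X], r.natDegree < e →
      ∑ m ∈ Finset.range M, p.coeff m * r.eval (m : ℂ) = 0 := by
    intro e he r hr
    have : ∀ m : ℕ, r.eval (m : ℂ) = ∑ i ∈ Finset.range e, r.coeff i * (m : ℂ) ^ i :=
      fun m => eval_eq_sum_range' hr _
    simp_rw [this, Finset.mul_sum]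
    rw [Finset.sum_comm]
    refine Finset.sum_eq_zero fun i hi => ?_
    have : ∑ m ∈ Finset.range M, p.coeff m * (r.coeff i * (m : ℂ) ^ i)
        = r.coeff i * S i := by
      rw [hS, Finset.mul_sum]
      exact Finset.sum_congr rfl fun m _ => by ring
    rw [this, he i (Finset.mem_range.1 hi), mul_zero]
  have hdescsum : ∀ kk : ℕ,
      ∑ m ∈ Finset.range M, p.coeff m * ((descPochhammer ℂ kk).eval (m : ℂ))
        = (Nat.factorial kk : ℂ) * B kk := by
    intro kk
    rw [hB, Finset.mul_sum]
    refine Finset.sum_congr rfl fun m _ => ?_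
    rw [descPochhammer_eval_eq_descFactorial, Nat.descFactorial_eq_factorial_mul_choose,
      Nat.cast_mul]
    ring
  rw [hdvd_iff]
  constructor
  · intro hSz kk hkk
    have hdeg : (descPochhammer ℂ kk).natDegree < d := by
      rw [descPochhammer_natDegree]; exact hkk
    have h0 := bridge d hSz (descPochhammer ℂ kk) hdeg
    rw [hdescsum] at h0
    rcases mul_eq_zero.1 h0 with h | h
    · exact absurd h (Nat.cast_ne_zero.2 (Nat.factorial_ne_zero kk))
    · exact h
  · intro hBz i
    induction i using Nat.strong_induction_on with
    | _ i IH =>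
      intro hi
      have hdesc0 : ∑ m ∈ Finset.range M, p.coeff m * ((descPochhammer ℂ i).eval (m : ℂ)) = 0 := by
        rw [hdescsum, hBz i hi, mul_zero]
      rcases Nat.eq_zero_or_pos i with h0 | h1
      · subst h0
        simpa [hS, descPochhammer_zero] using hdesc0
      · set g : ℂ[X] := X ^ i - descPochhammer ℂ i with hg
        have hgdeg : g.natDegree < i := by
          have hdegeq : (X ^ i : ℂ[X]).degree = (descPochhammer ℂ i).degree := by
            rw [degree_X_pow,
              Polynomial.degree_eq_natDegree (monic_descPochhammer ℂ i).ne_zero,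
              descPochhammer_natDegree]
          have hlc : (X ^ i : ℂ[X]).leadingCoeff = (descPochhammer ℂ i).leadingCoeff := by
            rw [leadingCoeff_X_pow, (monic_descPochhammer ℂ i).leadingCoeff]
          rcases eq_or_ne g 0 with hg0 | hg0
          · rw [hg0]; simpa using h1
          · have hdeg : g.degree < (i : ℕ) := by
              have := Polynomial.degree_sub_lt hdegeq (pow_ne_zero i X_ne_zero) hlc
              rwa [degree_X_pow] at this
            exact (Polynomial.natDegree_lt_iff_degree_lt hg0).2 hdeg
        have hgsum : ∑ m ∈ Finset.range M, p.coeff m * g.eval (m : ℂ) = 0 := by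
          refine bridge i (fun t ht => IH t ht (ht.trans hi)) g hgdeg
        have hsplit : S i = ∑ m ∈ Finset.range M,
            p.coeff m * ((descPochhammer ℂ i).eval (m : ℂ))
            + ∑ m ∈ Finset.range M, p.coeff m * g.eval (m : ℂ) := by
          rw [hS, ← Finset.sum_add_distrib]
          refine Finset.sum_congr rfl fun m _ => ?_
          rw [hg]
          simp only [eval_sub, eval_pow, eval_X]
          ring
        have : S i = 0 := by rw [hsplit, hdesc0, hgsum, add_zero]
        exact this

end Poly

section Indep

open MvPolynomial

/-- Linear independence of `D^[i] (X j)` for `i < d`, in the aggregate sense needed. -/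
lemma indep_lemma (n : ℕ) (D : Derivation ℂ (MvPolynomial (Fin n) ℂ) (MvPolynomial (Fin n) ℂ))
    (d : ℕ) (hd : ∀ i : Fin n, (⇑D)^[d] (X i) = 0)
    (hmin : ∀ m : ℕ, (∀ i : Fin n, (⇑D)^[m] (X i) = 0) → d ≤ m)
    (hd1 : 0 < d) (lam : ℕ → ℂ)
    (h : ∀ j : Fin n, ∑ i ∈ Finset.range d, lam i • (⇑D)^[i] (X j) = 0) :
    ∀ i < d, lam i = 0 := by
  set A := MvPolynomial (Fin n) ℂ
  set L : A →ₗ[ℂ] A := (D : A →ₗ[ℂ] A) with hL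
  intro i
  induction i using Nat.strong_induction_on with
  | _ i IH =>
    intro hi
    by_contra hne
    have key : ∀ j : Fin n, lam i • (⇑D)^[d - 1] (X j) = 0 := by
      intro j
      have h0 := congrArg (fun x => (L ^ (d - 1 - i)) x) (h j)
      simp only [map_zero] at h0
      rw [map_sum] at h0
      have hterm : ∀ s ∈ Finset.range d,
          (L ^ (d - 1 - i)) (lam s • (⇑D)^[s] (X j))
            = lam s • (⇑D)^[d - 1 - i + s] (X j) := by
        intro s _
        rw [map_smul, iter_toLin, ← Module.End.mul_apply, ← pow_add, ← iter_toLin]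
      rw [Finset.sum_congr rfl hterm] at h0
      have hsingle : ∑ s ∈ Finset.range d, lam s • (⇑D)^[d - 1 - i + s] (X j)
          = lam i • (⇑D)^[d - 1 - i + i] (X j) := by
        refine Finset.sum_eq_single_of_mem i (Finset.mem_range.2 hi) ?_
        intro s hs hsne
        rcases lt_or_gt_of_ne hsne with hlt | hgt
        · rw [IH s hlt (hlt.trans hi), zero_smul]
        · rw [iter_vanish D (hd j) (by omega), smul_zero]
      rw [hsingle] at h0
      rwa [show d - 1 - i + i = d - 1 by omega] at h0
    have hzero : ∀ j : Fin n, (⇑D)^[d - 1] (X j) = 0 := by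
      intro j
      have := key j
      rcases smul_eq_zero.1 this with h' | h'
      · exact absurd h' hne
      · exact h'
    have := hmin (d - 1) hzero
    omega

end Indep

open MvPolynomial in
/-- Main theorem: if `D` is a locally nilpotent derivation of `ℂ[X_1,…,X_n]` and `d` is
the least `m` with `D^[m](X_i) = 0` for all `i`, then a polynomial `p ∈ ℂ[T]` annihilates
the exponential automorphism `F` (i.e. `Σ_m (coeff m p) • exp(mD)(X_j) = 0` for all `j`,
where `(F^[m])_j = exp(mD)(X_j)`) if and only if `(T − 1)^d ∣ p`; that is, the minimal
polynomial of `F` is `(T − 1)^d`. -/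
theorem exp_automorphism_minimal_polynomial
    (n : ℕ) (D : Derivation ℂ (MvPolynomial (Fin n) ℂ) (MvPolynomial (Fin n) ℂ))
    (hD : ∀ a : MvPolynomial (Fin n) ℂ, ∃ m : ℕ, (⇑D)^[m] a = 0)
    (d : ℕ) (hd : ∀ i : Fin n, (⇑D)^[d] (X i) = 0)
    (hmin : ∀ m : ℕ, (∀ i : Fin n, (⇑D)^[m] (X i) = 0) → d ≤ m) :
    ∀ p : Polynomial ℂ,
      (∀ j : Fin n,
          ∑ m ∈ Finset.range (p.natDegree + 1),
            p.coeff m • expMap ℂ (m • D) (X j) = 0)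
        ↔ (Polynomial.X - 1) ^ d ∣ p := by
  intro p
  rcases Nat.eq_zero_or_pos d with hd0 | hd1
  · subst hd0
    constructor
    · intro _
      simpa using one_dvd p
    · intro _ j
      have hx : (X j : MvPolynomial (Fin n) ℂ) = 0 := by simpa using hd j
      exact absurd hx (MvPolynomial.X_ne_zero j)
  · set M := p.natDegree + 1 with hM
    set S : ℕ → ℂ := fun i => ∑ m ∈ Finset.range M, p.coeff m * (m : ℂ) ^ i with hS
    have hexp : ∀ (m : ℕ) (j : Fin n), expMap ℂ (m • D) (X j)
        = ∑ i ∈ Finset.range d,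
            ((m : ℂ) ^ i * (Nat.factorial i : ℂ)⁻¹) • (⇑D)^[i] (X j) :=
      fun m j => expMap_smul_eq D (hd j) m
    have hLHS : ∀ j : Fin n,
        (∑ m ∈ Finset.range M, p.coeff m • expMap ℂ (m • D) (X j))
          = ∑ i ∈ Finset.range d,
              (((Nat.factorial i : ℂ)⁻¹) * S i) • (⇑D)^[i] (X j) := by
      intro j
      simp_rw [hexp, Finset.smul_sum, smul_smul]
      rw [Finset.sum_comm]
      refine Finset.sum_congr rfl fun i _ => ?_
      rw [← Finset.sum_smul]
      congr 1
      rw [hS, Finset.mul_sum]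
      refine Finset.sum_congr rfl fun m _ => ?_
      ring
    constructor
    · intro h
      have h' : ∀ j : Fin n,
          ∑ i ∈ Finset.range d,
            (((Nat.factorial i : ℂ)⁻¹) * S i) • (⇑D)^[i] (X j) = 0 :=
        fun j => (hLHS j).symm.trans (h j)
      have hzero := indep_lemma n D d hd hmin hd1
        (fun i => ((Nat.factorial i : ℂ)⁻¹) * S i) h'
      have hSz : ∀ i < d, S i = 0 := by
        intro i hi
        have := hzero i hi
        rcases mul_eq_zero.1 this with h'' | h''
        · exact absurd h'' (inv_ne_zero (Nat.cast_ne_zero.2 (Nat.factorial_ne_zero i)))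
        · exact h''
      exact (poly_equiv d p).1 hSz
    · intro hdvd j
      rw [hLHS j]
      have hSz : ∀ i < d, S i = 0 := (poly_equiv d p).2 hdvd
      refine Finset.sum_eq_zero fun i hi => ?_
      rw [hSz i (Finset.mem_range.1 hi), mul_zero, zero_smul]
end

section
/- Let D be a locally nilpotent ℂ-derivation of ℂ[X_1, …, X_n] and let d := min{m ∈ ℕ : D^[m](X_i) = 0 for all i = 1, …, n}, with d ≥ 1. Then for every j = 1, …, n, exp(−D)(X_j) = Σ_{m=0}^{d−1} (−1)^m · C(d, m+1) · exp(mD)(X_j); equivalently, the inverse of the exponential automorphism F = (exp(D)(X_1), …, exp(D)(X_n)) is F^{−1} = Σ_{m=0}^{d−1} (−1)^m C(d, m+1) F^[m]. -/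
open Finset fwdDiff

/-- The `d`-th forward difference of `t ^ i` vanishes when `i < d`. -/
lemma fwdDiff_pow_eq_zero : ∀ i d : ℕ, i < d → (fwdDiff (1:ℂ))^[d] (fun t : ℂ => t ^ i) = 0 := by
  intro i
  induction i using Nat.strong_induction_on with
  | _ i IH =>
    intro d hid
    obtain ⟨e, rfl⟩ : ∃ e, d = e + 1 := ⟨d - 1, by omega⟩
    have key : (fwdDiff (1:ℂ)) (fun t : ℂ => t ^ i) =
        ∑ j ∈ range i, (fun t : ℂ => (i.choose j : ℂ) • t ^ j) := by
      funext t
      simp only [fwdDiff, Finset.sum_apply]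
      rw [add_pow, Finset.sum_range_succ]
      simp [smul_eq_mul, mul_comm]
    rw [Function.iterate_succ_apply, key, fwdDiff_iter_finset_sum]
    refine Finset.sum_eq_zero fun j hj => ?_
    have hji := mem_range.mp hj
    have : (fun t : ℂ => (i.choose j : ℂ) • t ^ j) = (i.choose j : ℂ) • (fun t : ℂ => t ^ j) := rfl
    rw [this, fwdDiff_iter_const_smul, IH j hji e (by omega)]
    simp

lemma alt_sum_identity (d i : ℕ) (hi : i < d) :
    ∑ m ∈ range d, ((-1:ℂ)^m * (d.choose (m+1) : ℂ)) * (m:ℂ)^i = (-1:ℂ)^i := by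
  have h0 := fwdDiff_iter_eq_sum_shift (1:ℂ) (fun t : ℂ => t ^ i) d (-1)
  rw [fwdDiff_pow_eq_zero i d hi] at h0
  simp only [Pi.zero_apply, zsmul_eq_mul, smul_eq_mul, Int.cast_mul, Int.cast_pow,
    Int.cast_neg, Int.cast_one, Int.cast_natCast, mul_one] at h0
  have h1 : ∑ k ∈ range (d+1), (-1:ℂ)^k * (d.choose k : ℂ) * ((k:ℂ) - 1)^i = 0 := by
    have hc : ∑ k ∈ range (d+1), (-1:ℂ)^k * (d.choose k : ℂ) * ((k:ℂ) - 1)^i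
        = (-1:ℂ)^d * ∑ k ∈ range (d+1),
            ((-1:ℂ)^(d-k) * (d.choose k : ℂ)) * ((-1 : ℂ) + (k:ℂ)) ^ i := by
      rw [mul_sum]
      refine sum_congr rfl fun k hk => ?_
      have hk' : k ≤ d := by have := mem_range.mp hk; omega
      have e1 : (-1:ℂ)^d = (-1)^(d-k) * (-1)^k := by
        rw [← pow_add, Nat.sub_add_cancel hk']
      have e2 : (-1:ℂ)^(d-k) * (-1)^(d-k) = 1 := by
        rw [← pow_add]; exact Even.neg_one_pow ⟨d-k, rfl⟩
      have e3 : ((k:ℂ) - 1) = (-1 : ℂ) + (k:ℂ) := by ring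
      rw [e3]
      linear_combination (-((-1:ℂ)^k * ((d.choose k : ℂ) * ((-1:ℂ) + (k:ℂ)) ^ i))) * e2
        + (-((-1:ℂ)^(d-k) * ((d.choose k : ℂ) * ((-1:ℂ) + (k:ℂ)) ^ i))) * e1
    rw [hc]
    have : ∑ k ∈ range (d+1), ((-1:ℂ)^(d-k) * (d.choose k : ℂ)) * ((-1 : ℂ) + (k:ℂ)) ^ i = 0 := by
      simp only [nsmul_eq_mul, mul_one] at h0
      exact h0.symm
    rw [this, mul_zero]
  rw [Finset.sum_range_succ'] at h1
  have hterm : ∀ m ∈ range d, (-1:ℂ)^(m+1) * (d.choose (m+1):ℂ) * (((m+1:ℕ):ℂ) - 1)^i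
      = -(((-1:ℂ)^m * (d.choose (m+1):ℂ)) * (m:ℂ)^i) := by
    intro m _
    push_cast
    ring
  rw [Finset.sum_congr rfl hterm] at h1
  rw [Finset.sum_neg_distrib] at h1
  norm_num at h1
  linear_combination -h1

section aux'
variable {A : Type*} [CommRing A] [Algebra ℂ A]

lemma iterate_smul_apply (D : Derivation ℂ A A) (c : ℂ) (i : ℕ) (a : A) :
    (⇑(c • D))^[i] a = c ^ i • (⇑D)^[i] a := by
  induction i with
  | zero => simp
  | succ i ih =>
    rw [Function.iterate_succ_apply', ih, Function.iterate_succ_apply',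
      Derivation.smul_apply, Derivation.map_smul, smul_smul, ← pow_succ']

lemma iterate_zero_of_deriv (D : Derivation ℂ A A) : ∀ m : ℕ, (⇑D)^[m] (0 : A) = 0 := by
  intro m
  induction m with
  | zero => simp
  | succ m ih => rw [Function.iterate_succ_apply', ih, map_zero]

lemma expMap_eq_sum (D : Derivation ℂ A A) (a : A) (K : ℕ) (hK : (⇑D)^[K] a = 0) :
    expMap ℂ D a = ∑ i ∈ Finset.range K, ((i.factorial : ℂ)⁻¹) • (⇑D)^[i] a := by
  classical
  have h : ∃ n : ℕ, (⇑D)^[n] a = 0 := ⟨K, hK⟩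
  rw [expMap, dif_pos h]
  have hNK : Nat.find h ≤ K := Nat.find_le hK
  refine Finset.sum_subset (Finset.range_subset_range.mpr hNK) ?_
  intro i hiK hiN
  have hiN' : Nat.find h ≤ i := by
    by_contra hc
    exact hiN (Finset.mem_range.mpr (not_le.mp hc))
  have hz : (⇑D)^[i] a = 0 := by
    rw [show i = (i - Nat.find h) + Nat.find h by omega, Function.iterate_add_apply,
      Nat.find_spec h, iterate_zero_of_deriv]
  rw [hz, smul_zero]

end aux'

open MvPolynomial in
/-- Corollary: if `D` is a locally nilpotent derivation of `ℂ[X_1,…,X_n]` and `d ≥ 1` is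
the least `m` with `D^[m](X_i) = 0` for all `i`, then the inverse of the exponential
automorphism `F` is given by `F^{−1} = Σ_{m=0}^{d−1} (−1)^m C(d, m+1) F^[m]`, i.e.
componentwise `exp(−D)(X_j) = Σ_{m=0}^{d−1} (−1)^m C(d, m+1) exp(mD)(X_j)`. -/
theorem exp_automorphism_inverse_formula
    (n : ℕ) (D : Derivation ℂ (MvPolynomial (Fin n) ℂ) (MvPolynomial (Fin n) ℂ))
    (hD : ∀ a : MvPolynomial (Fin n) ℂ, ∃ m : ℕ, (⇑D)^[m] a = 0)
    (d : ℕ) (hd1 : 1 ≤ d) (hd : ∀ i : Fin n, (⇑D)^[d] (X i) = 0)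
    (hmin : ∀ m : ℕ, (∀ i : Fin n, (⇑D)^[m] (X i) = 0) → d ≤ m) :
    ∀ j : Fin n,
      expMap ℂ (-D) (X j)
        = ∑ m ∈ Finset.range d,
            ((-1 : ℂ) ^ m * (d.choose (m + 1) : ℂ)) • expMap ℂ (m • D) (X j) := by
  intro j
  have key : ∀ c : ℂ, expMap ℂ (c • D) (X j)
      = ∑ i ∈ Finset.range d, ((i.factorial : ℂ)⁻¹ * c ^ i) • (⇑D)^[i] (X j) := by
    intro c
    rw [expMap_eq_sum (c • D) (X j) d (by rw [iterate_smul_apply, hd j, smul_zero])]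
    refine Finset.sum_congr rfl fun i _ => ?_
    rw [iterate_smul_apply, smul_smul]
  have hneg : -D = (-1 : ℂ) • D := (neg_one_smul ℂ D).symm
  have hnat : ∀ m : ℕ, m • D = ((m : ℂ)) • D := fun m => (Nat.cast_smul_eq_nsmul ℂ m D).symm
  rw [hneg, key (-1)]
  have hrhs : ∀ m ∈ Finset.range d,
      ((-1 : ℂ) ^ m * (d.choose (m + 1) : ℂ)) • expMap ℂ (m • D) (X j)
      = ∑ i ∈ Finset.range d,
          (((-1 : ℂ) ^ m * (d.choose (m + 1) : ℂ)) * ((i.factorial : ℂ)⁻¹ * (m : ℂ) ^ i))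
            • (⇑D)^[i] (X j) := by
    intro m _
    rw [hnat m, key ((m : ℂ)), Finset.smul_sum]
    exact Finset.sum_congr rfl fun i _ => (smul_smul _ _ _)
  rw [Finset.sum_congr rfl hrhs, Finset.sum_comm]
  refine Finset.sum_congr rfl fun i hi => ?_
  rw [← Finset.sum_smul]
  congr 1
  have hid := alt_sum_identity d i (Finset.mem_range.mp hi)
  calc (i.factorial : ℂ)⁻¹ * (-1) ^ i
      = (i.factorial : ℂ)⁻¹ * ∑ m ∈ range d, ((-1:ℂ)^m * (d.choose (m+1) : ℂ)) * (m:ℂ)^i := by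
        rw [hid]
    _ = ∑ m ∈ Finset.range d,
          (((-1 : ℂ) ^ m * (d.choose (m + 1) : ℂ)) * ((i.factorial : ℂ)⁻¹ * (m : ℂ) ^ i)) := by
        rw [Finset.mul_sum]
        exact Finset.sum_congr rfl fun m _ => by ring
end
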